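/- arXiv:2507.04122 — 2 statements merged into one kernel-verified Lean document; each statement's English description precedes it below -/
import Mathlib

section
/- With notation as above, the map w ↦ wT gives a bijection between the set of minimal length double coset representatives of S_λ \ S_n / S_ν and the set of row semi-standard λ-tableaux of type ν (fillings of the λ-diagram with weakly increasing rows containing value i exactly m_i times). -/
def adjSet (n : ℕ) : Set (Equiv.Perm (Fin n)) :=
  {σ | ∃ (i : ℕ) (h : i + 1 < n), σ = Equiv.swap ⟨i, Nat.lt_of_succ_lt h⟩ ⟨i + 1, h⟩}

noncomputable def coxLen {n : ℕ} (w : Equiv.Perm (Fin n)) : ℕ :=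
  sInf {k | ∃ l : List (Equiv.Perm (Fin n)),
    l.length = k ∧ (∀ x ∈ l, x ∈ adjSet n) ∧ l.prod = w}

/-- The index of the block of the composition `c` containing position `k`
(positions and blocks are 0-indexed): the number of blocks ending at or before `k`. -/
def blockIdx (c : List ℕ) (k : ℕ) : ℕ :=
  ((Finset.range c.length).filter (fun i => (c.take (i + 1)).sum ≤ k)).card

/-- The Young subgroup of `S_n` attached to a composition `c` of `n`:
permutations preserving each consecutive block of sizes given by `c`. -/
def young (n : ℕ) (c : List ℕ) : Set (Equiv.Perm (Fin n)) :=
  {w | ∀ k : Fin n, blockIdx c ((w k : Fin n) : ℕ) = blockIdx c (k : ℕ)}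

/-- The double coset `S_c · g · S_d` in `S_n`. -/
def dCoset (n : ℕ) (c d : List ℕ) (g : Equiv.Perm (Fin n)) : Set (Equiv.Perm (Fin n)) :=
  {w | ∃ a ∈ young n c, ∃ b ∈ young n d, w = a * g * b}


def rowIncr (n : ℕ) (lam : List ℕ) (f : Fin n → ℕ) : Prop :=
  ∀ (k : ℕ) (h : k + 1 < n), blockIdx lam k = blockIdx lam (k + 1) →
    f ⟨k, Nat.lt_of_succ_lt h⟩ ≤ f ⟨k + 1, h⟩

theorem Equiv.Perm.apply_inv_self {α : Type*} (f : Equiv.Perm α) (x : α) : f (f⁻¹ x) = x :=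
  f.apply_symm_apply x

theorem Equiv.Perm.inv_apply_self {α : Type*} (f : Equiv.Perm α) (x : α) : f⁻¹ (f x) = x :=
  f.symm_apply_apply x

namespace CoxAux

open Finset Equiv

variable {n : ℕ}

/-! ### blockIdx basics -/

lemma blockIdx_mono (c : List ℕ) : Monotone (blockIdx c) := by
  intro k l hkl
  apply Finset.card_le_card
  intro i hi
  simp only [Finset.mem_filter, Finset.mem_range] at *
  exact ⟨hi.1, hi.2.trans hkl⟩

lemma lt_of_blockIdx_lt {c : List ℕ} {k l : ℕ} (h : blockIdx c k < blockIdx c l) : k < l := by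
  by_contra hle
  push_neg at hle
  exact absurd (blockIdx_mono c hle) (by omega)

lemma sum_take_le (c : List ℕ) (i : ℕ) : (c.take i).sum ≤ c.sum := by
  have := List.sum_take_add_sum_drop c i
  omega

lemma sum_take_mono (c : List ℕ) {i j : ℕ} (h : i ≤ j) : (c.take i).sum ≤ (c.take j).sum := by
  have h2 := sum_take_le (c.take j) i
  rwa [List.take_take, min_eq_left h] at h2

lemma downclosed_eq_range (S : Finset ℕ) (h : ∀ i ∈ S, ∀ j, j ≤ i → j ∈ S) :
    S = Finset.range S.card := by
  ext m
  simp only [Finset.mem_range]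
  constructor
  · intro hm
    have hsub : Finset.range (m + 1) ⊆ S := fun j hj =>
      h m hm j (Nat.lt_succ_iff.mp (Finset.mem_range.mp hj))
    have := Finset.card_le_card hsub
    rw [Finset.card_range] at this
    omega
  · intro hm
    by_contra hmem
    have hsub : S ⊆ Finset.range m := by
      intro i hi
      rw [Finset.mem_range]
      by_contra hlt
      push_neg at hlt
      exact hmem (h i hi m hlt)
    have := Finset.card_le_card hsub
    rw [Finset.card_range] at this
    omega

lemma blockIdx_filter_eq (c : List ℕ) (k : ℕ) :
    (Finset.range c.length).filter (fun i => (c.take (i + 1)).sum ≤ k)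
      = Finset.range (blockIdx c k) := by
  apply downclosed_eq_range
  intro i hi j hj
  simp only [Finset.mem_filter, Finset.mem_range] at *
  exact ⟨lt_of_le_of_lt hj hi.1, le_trans (sum_take_mono c (by omega)) hi.2⟩

lemma blockIdx_lt_length (c : List ℕ) (hc : c.sum = n) {k : ℕ} (hk : k < n) :
    blockIdx c k < c.length := by
  have hle : blockIdx c k ≤ c.length := by
    have := Finset.card_filter_le (Finset.range c.length)
      (fun i => (c.take (i + 1)).sum ≤ k)
    simpa [blockIdx] using this
  rcases lt_or_eq_of_le hle with h | h
  · exact h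
  · exfalso
    have hfe := blockIdx_filter_eq c k
    rw [h] at hfe
    rcases Nat.eq_zero_or_pos c.length with h0 | hpos
    · rw [List.length_eq_zero_iff] at h0
      subst h0
      simp at hc
      omega
    · have : c.length - 1 ∈ (Finset.range c.length).filter
          (fun i => (c.take (i + 1)).sum ≤ k) := by
        rw [hfe]
        exact Finset.mem_range.mpr (by omega)
      simp only [Finset.mem_filter, Finset.mem_range] at this
      have he : c.length - 1 + 1 = c.length := by omega
      rw [he, List.take_length] at this
      omega

lemma blockIdx_eq_iff (c : List ℕ) {k j : ℕ} (hj : j < c.length) :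
    blockIdx c k = j ↔ (c.take j).sum ≤ k ∧ k < (c.take (j + 1)).sum := by
  constructor
  · intro h
    constructor
    · cases j with
      | zero => simp
      | succ m =>
        have : m ∈ Finset.range (blockIdx c k) := by
          rw [h]; exact Finset.mem_range.mpr (Nat.lt_succ_self m)
        rw [← blockIdx_filter_eq] at this
        simp only [Finset.mem_filter, Finset.mem_range] at this
        exact this.2
    · by_contra hk
      push_neg at hk
      have : j ∈ (Finset.range c.length).filter
          (fun i => (c.take (i + 1)).sum ≤ k) :=
        Finset.mem_filter.mpr ⟨Finset.mem_range.mpr hj, hk⟩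
      rw [blockIdx_filter_eq, h] at this
      simp at this
  · rintro ⟨h1, h2⟩
    have hfe : (Finset.range c.length).filter (fun i => (c.take (i + 1)).sum ≤ k)
        = Finset.range j := by
      ext i
      simp only [Finset.mem_filter, Finset.mem_range]
      constructor
      · rintro ⟨hi, hsum⟩
        by_contra hij
        push_neg at hij
        have := le_trans (sum_take_mono c (show j + 1 ≤ i + 1 by omega)) hsum
        omega
      · intro hij
        exact ⟨lt_of_lt_of_le hij hj.le, le_trans (sum_take_mono c (by omega)) h1⟩
    have : blockIdx c k = ((Finset.range c.length).filter
        (fun i => (c.take (i + 1)).sum ≤ k)).card := rfl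
    rw [this, hfe, Finset.card_range]

lemma card_blockIdx_fiber (c : List ℕ) (hc : c.sum = n) {j : ℕ} (hj : j < c.length) :
    (Finset.univ.filter (fun k : Fin n => blockIdx c (k : ℕ) = j)).card = c.getD j 0 := by
  have hub : (c.take (j + 1)).sum ≤ n := hc ▸ sum_take_le c (j + 1)
  have himg : (Finset.univ.filter (fun k : Fin n => blockIdx c (k : ℕ) = j)).image
      (fun k : Fin n => (k : ℕ))
      = Finset.Ico ((c.take j).sum) ((c.take (j + 1)).sum) := by
    ext m
    simp only [Finset.mem_image, Finset.mem_filter, Finset.mem_univ, true_and, Finset.mem_Ico]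
    constructor
    · rintro ⟨k, hk, rfl⟩
      exact (blockIdx_eq_iff c hj).mp hk
    · intro hm
      have hmn : m < n := lt_of_lt_of_le hm.2 hub
      exact ⟨⟨m, hmn⟩, (blockIdx_eq_iff c hj).mpr hm, rfl⟩
  have hcard : (Finset.univ.filter (fun k : Fin n => blockIdx c (k : ℕ) = j)).card
      = (Finset.Ico ((c.take j).sum) ((c.take (j + 1)).sum)).card := by
    rw [← himg, Finset.card_image_of_injective _ Fin.val_injective]
  rw [hcard, Nat.card_Ico, List.sum_take_succ c j hj, List.getD_eq_getElem c 0 hj]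
  omega

/-! ### monotone functions with equal fiber cards -/

lemma downclosed_fin (S : Finset (Fin n)) (h : ∀ i ∈ S, ∀ j, j ≤ i → j ∈ S) (k : Fin n) :
    k ∈ S ↔ (k : ℕ) < S.card := by
  constructor
  · intro hk
    have hsub : Finset.Iic k ⊆ S := fun j hj => h k hk j (Finset.mem_Iic.mp hj)
    have := Finset.card_le_card hsub
    rw [Fin.card_Iic] at this
    omega
  · intro hk
    by_contra hmem
    have hsub : S ⊆ Finset.Iio k := by
      intro i hi
      rw [Finset.mem_Iio]
      by_contra hik
      push_neg at hik
      exact hmem (h i hi k hik)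
    have := Finset.card_le_card hsub
    rw [Fin.card_Iio] at this
    omega

lemma card_filter_le_eq_sum (g : Fin n → ℕ) (j : ℕ) :
    (Finset.univ.filter fun k => g k ≤ j).card
      = ∑ j' ∈ Finset.range (j + 1), (Finset.univ.filter fun k => g k = j').card := by
  induction j with
  | zero => simp [Nat.le_zero]
  | succ m ih =>
    rw [Finset.sum_range_succ, ← ih]
    have hun : (Finset.univ.filter fun k : Fin n => g k ≤ m + 1)
        = (Finset.univ.filter fun k => g k ≤ m) ∪ (Finset.univ.filter fun k => g k = m + 1) := by
      ext k
      simp only [Finset.mem_filter, Finset.mem_univ, true_and, Finset.mem_union]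
      omega
    rw [hun, Finset.card_union_of_disjoint]
    rw [Finset.disjoint_left]
    intro k hk1 hk2
    simp only [Finset.mem_filter, Finset.mem_univ, true_and] at hk1 hk2
    omega

lemma monotone_eq_of_fiber_card_eq {g h : Fin n → ℕ} (hg : Monotone g) (hh : Monotone h)
    (hc : ∀ j, (Finset.univ.filter fun k => g k = j).card
      = (Finset.univ.filter fun k => h k = j).card) : g = h := by
  have key : ∀ (u : Fin n → ℕ), Monotone u → ∀ (j : ℕ) (k : Fin n),
      u k ≤ j ↔ (k : ℕ) < (Finset.univ.filter fun k => u k ≤ j).card := by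
    intro u hu j k
    have := downclosed_fin (Finset.univ.filter fun k => u k ≤ j) ?_ k
    · simpa using this
    · intro i hi j' hj'
      simp only [Finset.mem_filter, Finset.mem_univ, true_and] at *
      exact le_trans (hu hj') hi
  have hcards : ∀ j, (Finset.univ.filter fun k => g k ≤ j).card
      = (Finset.univ.filter fun k => h k ≤ j).card := by
    intro j
    rw [card_filter_le_eq_sum, card_filter_le_eq_sum]
    exact Finset.sum_congr rfl fun j' _ => hc j'
  have hiff : ∀ (j : ℕ) (k : Fin n), g k ≤ j ↔ h k ≤ j := by
    intro j k
    rw [key g hg j k, key h hh j k, hcards j]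
  funext k
  exact le_antisymm ((hiff (h k) k).mpr le_rfl) ((hiff (g k) k).mp le_rfl)

/-! ### inversions -/

def invF (w : Equiv.Perm (Fin n)) : Finset (Fin n × Fin n) :=
  Finset.univ.filter fun p => p.1 < p.2 ∧ w p.2 < w p.1

noncomputable def invNum (w : Equiv.Perm (Fin n)) : ℕ := (invF w).card

lemma invNum_inv (w : Equiv.Perm (Fin n)) : invNum w⁻¹ = invNum w := by
  apply Finset.card_equiv ((Equiv.prodComm _ _).trans (Equiv.prodCongr w⁻¹ w⁻¹))
  intro p
  simp only [invF, Finset.mem_filter, Finset.mem_univ, true_and, Equiv.trans_apply,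
    Equiv.prodComm_apply, Prod.swap_prod_mk, Equiv.prodCongr_apply, Prod.map_fst, Prod.map_snd,
    Prod.fst_swap, Prod.snd_swap, Equiv.Perm.apply_inv_self]
  constructor
  · rintro ⟨h1, h2⟩; exact ⟨h2, h1⟩
  · rintro ⟨h1, h2⟩; exact ⟨h2, h1⟩


/-! ### adjacent swaps -/

section Swap

variable {i : ℕ} (h : i + 1 < n)

lemma swap_lt {p q : Fin n} (hpq : p < q)
    (hne : ¬(p = (⟨i, Nat.lt_of_succ_lt h⟩ : Fin n) ∧ q = (⟨i + 1, h⟩ : Fin n))) :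
    Equiv.swap (⟨i, Nat.lt_of_succ_lt h⟩ : Fin n) ⟨i + 1, h⟩ p
      < Equiv.swap (⟨i, Nat.lt_of_succ_lt h⟩ : Fin n) ⟨i + 1, h⟩ q := by
  set a : Fin n := ⟨i, Nat.lt_of_succ_lt h⟩ with ha
  set b : Fin n := ⟨i + 1, h⟩ with hb
  have hav : (a : ℕ) = i := rfl
  have hbv : (b : ℕ) = i + 1 := rfl
  rw [Fin.lt_def] at hpq ⊢
  rcases eq_or_ne p a with hpa | hpa
  · subst hpa
    have hqb : q ≠ b := fun hqb => hne ⟨rfl, hqb⟩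
    have hqa : q ≠ a := by
      intro hqa; rw [hqa] at hpq; omega
    rw [Equiv.swap_apply_left, Equiv.swap_apply_of_ne_of_ne hqa hqb]
    rw [Fin.ne_iff_vne] at hqb
    omega
  · rcases eq_or_ne p b with hpb | hpb
    · subst hpb
      have hqb : q ≠ b := by
        intro hqb; rw [hqb] at hpq; omega
      have hqa : q ≠ a := by
        rw [Fin.ne_iff_vne]; omega
      rw [Equiv.swap_apply_right, Equiv.swap_apply_of_ne_of_ne hqa hqb]
      omega
    · rcases eq_or_ne q a with hqa | hqa
      · subst hqa
        rw [Equiv.swap_apply_left, Equiv.swap_apply_of_ne_of_ne hpa hpb]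
        omega
      · rcases eq_or_ne q b with hqb | hqb
        · subst hqb
          rw [Equiv.swap_apply_right, Equiv.swap_apply_of_ne_of_ne hpa hpb]
          rw [Fin.ne_iff_vne] at hpa
          omega
        · rw [Equiv.swap_apply_of_ne_of_ne hpa hpb, Equiv.swap_apply_of_ne_of_ne hqa hqb]
          omega

lemma card_invF_sdiff (w : Equiv.Perm (Fin n)) :
    (invF (w * Equiv.swap (⟨i, Nat.lt_of_succ_lt h⟩ : Fin n) ⟨i + 1, h⟩)
        \ {((⟨i, Nat.lt_of_succ_lt h⟩ : Fin n), (⟨i + 1, h⟩ : Fin n))}).card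
      = (invF w \ {((⟨i, Nat.lt_of_succ_lt h⟩ : Fin n), (⟨i + 1, h⟩ : Fin n))}).card := by
  set a : Fin n := ⟨i, Nat.lt_of_succ_lt h⟩ with ha
  set b : Fin n := ⟨i + 1, h⟩ with hb
  set s : Equiv.Perm (Fin n) := Equiv.swap a b with hs
  have hab : a < b := by rw [Fin.lt_def]; exact Nat.lt_succ_self i
  apply Finset.card_equiv (Equiv.prodCongr s s)
  intro p
  simp only [invF, Finset.mem_sdiff, Finset.mem_filter, Finset.mem_univ, true_and,
    Finset.mem_singleton, Equiv.prodCongr_apply, Prod.map_fst, Prod.map_snd]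
  simp only [Equiv.Perm.mul_apply]
  have hssp1 : s (s p.1) = p.1 := Equiv.swap_apply_self a b p.1
  have hssp2 : s (s p.2) = p.2 := Equiv.swap_apply_self a b p.2
  constructor
  · rintro ⟨⟨h1, h2⟩, h3⟩
    have hne : ¬(p.1 = a ∧ p.2 = b) := by
      rintro ⟨e1, e2⟩; exact h3 (Prod.ext e1 e2)
    refine ⟨⟨swap_lt h h1 hne, h2⟩, ?_⟩
    intro hcon
    have e1 : s p.1 = a := congrArg Prod.fst hcon
    have e2 : s p.2 = b := congrArg Prod.snd hcon
    have : p.1 = b := by rw [← hssp1, e1, Equiv.swap_apply_left]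
    have : p.2 = a := by rw [← hssp2, e2, Equiv.swap_apply_right]
    rw [Fin.lt_def] at h1
    omega
  · rintro ⟨⟨h1, h2⟩, h3⟩
    have hne : ¬(s p.1 = a ∧ s p.2 = b) := by
      rintro ⟨e1, e2⟩
      exact h3 (Prod.ext e1 e2)
    have hlt : p.1 < p.2 := by
      have := swap_lt h h1 hne
      rwa [hssp1, hssp2] at this
    refine ⟨⟨hlt, h2⟩, ?_⟩
    intro hcon
    have e1 : p.1 = a := congrArg Prod.fst hcon
    have e2 : p.2 = b := congrArg Prod.snd hcon
    rw [e1, e2] at h1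
    rw [hs, Equiv.swap_apply_left, Equiv.swap_apply_right, Fin.lt_def] at h1
    omega

lemma invNum_mul_swap_of_lt (w : Equiv.Perm (Fin n))
    (hlt : w ⟨i, Nat.lt_of_succ_lt h⟩ < w ⟨i + 1, h⟩) :
    invNum (w * Equiv.swap (⟨i, Nat.lt_of_succ_lt h⟩ : Fin n) ⟨i + 1, h⟩) = invNum w + 1 := by
  set a : Fin n := ⟨i, Nat.lt_of_succ_lt h⟩ with ha
  set b : Fin n := ⟨i + 1, h⟩ with hb
  set s : Equiv.Perm (Fin n) := Equiv.swap a b with hs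
  have hab : a < b := by rw [Fin.lt_def]; exact Nat.lt_succ_self i
  have hmem1 : (a, b) ∈ invF (w * s) := by
    simp only [invF, Finset.mem_filter, Finset.mem_univ, true_and, Equiv.Perm.mul_apply,
      hs, Equiv.swap_apply_left, Equiv.swap_apply_right]
    exact ⟨hab, hlt⟩
  have hmem2 : (a, b) ∉ invF w := by
    simp only [invF, Finset.mem_filter, Finset.mem_univ, true_and, not_and]
    intro _
    exact not_lt_of_gt hlt
  have hcard := card_invF_sdiff h w
  rw [Finset.sdiff_singleton_eq_erase, Finset.sdiff_singleton_eq_erase,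
    Finset.card_erase_of_mem hmem1, Finset.erase_eq_of_notMem hmem2] at hcard
  have hpos : 0 < (invF (w * s)).card := Finset.card_pos.mpr ⟨_, hmem1⟩
  unfold invNum
  omega

lemma invNum_mul_swap_of_gt (w : Equiv.Perm (Fin n))
    (hgt : w ⟨i + 1, h⟩ < w ⟨i, Nat.lt_of_succ_lt h⟩) :
    invNum (w * Equiv.swap (⟨i, Nat.lt_of_succ_lt h⟩ : Fin n) ⟨i + 1, h⟩) + 1 = invNum w := by
  set a : Fin n := ⟨i, Nat.lt_of_succ_lt h⟩ with ha
  set b : Fin n := ⟨i + 1, h⟩ with hb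
  set s : Equiv.Perm (Fin n) := Equiv.swap a b with hs
  have hab : a < b := by rw [Fin.lt_def]; exact Nat.lt_succ_self i
  have hmem1 : (a, b) ∉ invF (w * s) := by
    simp only [invF, Finset.mem_filter, Finset.mem_univ, true_and, Equiv.Perm.mul_apply,
      hs, Equiv.swap_apply_left, Equiv.swap_apply_right, not_and]
    intro _
    exact not_lt_of_gt hgt
  have hmem2 : (a, b) ∈ invF w := by
    simp only [invF, Finset.mem_filter, Finset.mem_univ, true_and]
    exact ⟨hab, hgt⟩
  have hcard := card_invF_sdiff h w
  rw [Finset.sdiff_singleton_eq_erase, Finset.sdiff_singleton_eq_erase,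
    Finset.card_erase_of_mem hmem2, Finset.erase_eq_of_notMem hmem1] at hcard
  have hpos : 0 < (invF w).card := Finset.card_pos.mpr ⟨_, hmem2⟩
  unfold invNum
  omega

lemma invNum_mul_swap_le (w : Equiv.Perm (Fin n)) :
    invNum (w * Equiv.swap (⟨i, Nat.lt_of_succ_lt h⟩ : Fin n) ⟨i + 1, h⟩) ≤ invNum w + 1 := by
  rcases lt_trichotomy (w ⟨i, Nat.lt_of_succ_lt h⟩) (w ⟨i + 1, h⟩) with hlt | heq | hgt
  · rw [invNum_mul_swap_of_lt h w hlt]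
  · exfalso
    have := w.injective heq
    rw [Fin.ext_iff] at this
    simp at this
  · have := invNum_mul_swap_of_gt h w hgt
    omega

end Swap

/-! ### chain lemma -/

def GoodN (c : List ℕ) (w : Equiv.Perm (Fin n)) : Prop :=
  ∀ (i : ℕ) (h : i + 1 < n), blockIdx c i = blockIdx c (i + 1) →
    w ⟨i, Nat.lt_of_succ_lt h⟩ < w ⟨i + 1, h⟩

lemma chain_lemma (c : List ℕ) (w : Equiv.Perm (Fin n)) (hadj : GoodN c w) :
    ∀ p q : Fin n, p < q → blockIdx c (p : ℕ) = blockIdx c (q : ℕ) → w p < w q := by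
  have key : ∀ d (i : ℕ) (hd : i + d + 1 < n), blockIdx c i = blockIdx c (i + d + 1) →
      w ⟨i, by omega⟩ < w ⟨i + d + 1, hd⟩ := by
    intro d
    induction d with
    | zero => intro i hd hb; exact hadj i hd hb
    | succ d ih =>
      intro i hd hb
      have h1 : blockIdx c i ≤ blockIdx c (i + d + 1) := blockIdx_mono c (by omega)
      have h2 : blockIdx c (i + d + 1) ≤ blockIdx c (i + d + 1 + 1) := blockIdx_mono c (by omega)
      have hb' : blockIdx c i = blockIdx c (i + d + 1 + 1) := by
        have : i + (d + 1) + 1 = i + d + 1 + 1 := by omega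
        rw [← this]; exact hb
      have hstep := hadj (i + d + 1) (by omega) (by omega)
      have hih := ih i (by omega) (by omega)
      have : w ⟨i, by omega⟩ < w ⟨i + d + 1 + 1, by omega⟩ := lt_trans hih hstep
      convert this using 3
      omega
  intro p q hpq hb
  obtain ⟨pv, hp⟩ := p
  obtain ⟨qv, hq⟩ := q
  rw [Fin.mk_lt_mk] at hpq
  have e : pv + (qv - pv - 1) + 1 = qv := by omega
  have hblk : blockIdx c pv = blockIdx c (pv + (qv - pv - 1) + 1) := by rw [e]; exact hb
  have := key (qv - pv - 1) pv (by omega) hblk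
  have heq : (⟨qv, hq⟩ : Fin n) = ⟨pv + (qv - pv - 1) + 1, by omega⟩ := Fin.ext e.symm
  rw [heq]
  exact this

/-- [n] is a single block: for the chain lemma with trivial block condition. -/
lemma blockIdx_singleton (k : ℕ) (hk : k < n) : blockIdx [n] k = 0 := by
  have h := blockIdx_lt_length (c := [n]) (by simp) hk
  simpa using h

lemma eq_one_of_invNum_zero {w : Equiv.Perm (Fin n)} (hw : invNum w = 0) : w = 1 := by
  have hemp : invF w = ∅ := Finset.card_eq_zero.mp hw
  have hmono : StrictMono w := by
    intro p q hpq
    by_contra hle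
    push_neg at hle
    have hne : w q ≠ w p := fun e => absurd (w.injective e) (Fin.ne_of_lt hpq).symm
    have : (p, q) ∈ invF w := by
      simp only [invF, Finset.mem_filter, Finset.mem_univ, true_and]
      exact ⟨hpq, lt_of_le_of_ne hle hne⟩
    rw [hemp] at this
    simp at this
  have := Subsingleton.elim (hmono.orderIsoOfSurjective w w.surjective) (OrderIso.refl (Fin n))
  apply Equiv.ext
  intro x
  have hx := congrArg (fun (e : Fin n ≃o Fin n) => e x) this
  simpa using hx

lemma exists_descent {w : Equiv.Perm (Fin n)} (hw : invNum w ≠ 0) :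
    ∃ (i : ℕ) (h : i + 1 < n), w ⟨i + 1, h⟩ < w ⟨i, Nat.lt_of_succ_lt h⟩ := by
  by_contra hcon
  push_neg at hcon
  apply hw
  apply Finset.card_eq_zero.mpr
  rw [Finset.eq_empty_iff_forall_notMem]
  intro p hp
  simp only [invF, Finset.mem_filter, Finset.mem_univ, true_and] at hp
  have hadj : GoodN [n] w := by
    intro i h hb
    have := hcon i h
    rcases lt_or_eq_of_le this with hlt | he
    · exact hlt
    · exfalso
      have hinj := w.injective he.symm
      rw [Fin.ext_iff] at hinj
      simp at hinj
  have := chain_lemma [n] w hadj p.1 p.2 hp.1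
    (by rw [blockIdx_singleton _ p.1.isLt, blockIdx_singleton _ p.2.isLt])
  exact absurd (this) (not_lt_of_gt hp.2)

lemma exists_word (w : Equiv.Perm (Fin n)) :
    ∃ l : List (Equiv.Perm (Fin n)),
      l.length = invNum w ∧ (∀ x ∈ l, x ∈ adjSet n) ∧ l.prod = w := by
  suffices H : ∀ m (w : Equiv.Perm (Fin n)), invNum w = m →
      ∃ l : List (Equiv.Perm (Fin n)),
        l.length = invNum w ∧ (∀ x ∈ l, x ∈ adjSet n) ∧ l.prod = w from H _ w rfl
  intro m
  induction m using Nat.strong_induction_on with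
  | _ m ih =>
    intro w hm
    rcases Nat.eq_zero_or_pos m with h0 | hpos
    · subst h0
      refine ⟨[], by simp [hm], by simp, ?_⟩
      rw [eq_one_of_invNum_zero hm]
      simp
    · obtain ⟨i, h, hdesc⟩ := exists_descent (by rw [hm]; omega)
      set s : Equiv.Perm (Fin n) := Equiv.swap ⟨i, Nat.lt_of_succ_lt h⟩ ⟨i + 1, h⟩ with hs
      have hrel := invNum_mul_swap_of_gt h w hdesc
      rw [← hs] at hrel
      obtain ⟨l, hl1, hl2, hl3⟩ := ih (invNum (w * s)) (by omega) (w * s) rfl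
      refine ⟨l ++ [s], ?_, ?_, ?_⟩
      · rw [List.length_append, hl1]
        simp
        omega
      · intro x hx
        rcases List.mem_append.mp hx with hx | hx
        · exact hl2 x hx
        · rw [List.mem_singleton] at hx
          exact hx ▸ ⟨i, h, rfl⟩
      · rw [List.prod_append, hl3]
        simp [hs, mul_assoc, Equiv.swap_mul_self]

lemma invNum_le_length (l : List (Equiv.Perm (Fin n))) (h : ∀ x ∈ l, x ∈ adjSet n) :
    invNum l.prod ≤ l.length := by
  induction l with
  | nil =>
    simp only [List.prod_nil, List.length_nil, Nat.le_zero]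
    apply Finset.card_eq_zero.mpr
    rw [Finset.eq_empty_iff_forall_notMem]
    intro p hp
    simp only [invF, Finset.mem_filter, Finset.mem_univ, true_and] at hp
    simp only [Equiv.Perm.one_apply] at hp
    exact absurd hp.2 (not_lt_of_gt hp.1)
  | cons x l ihl =>
    have hx := h x (List.mem_cons_self)
    obtain ⟨i, hi, rfl⟩ := hx
    have hl := ihl (fun y hy => h y (List.mem_cons_of_mem _ hy))
    rw [List.prod_cons, List.length_cons]
    set s : Equiv.Perm (Fin n) := Equiv.swap ⟨i, Nat.lt_of_succ_lt hi⟩ ⟨i + 1, hi⟩ with hs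
    have h1 : invNum (s * l.prod) = invNum (l.prod⁻¹ * s) := by
      rw [← invNum_inv (s * l.prod)]
      congr 1
    have h2 : invNum (l.prod⁻¹ * s) ≤ invNum l.prod⁻¹ + 1 := invNum_mul_swap_le hi _
    rw [invNum_inv] at h2
    omega

lemma coxLen_eq_invNum (w : Equiv.Perm (Fin n)) : coxLen w = invNum w := by
  obtain ⟨l, hl1, hl2, hl3⟩ := exists_word w
  have hub : coxLen w ≤ invNum w := Nat.sInf_le ⟨l, hl1, hl2, hl3⟩
  have hne : {k | ∃ l : List (Equiv.Perm (Fin n)),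
      l.length = k ∧ (∀ x ∈ l, x ∈ adjSet n) ∧ l.prod = w}.Nonempty :=
    ⟨invNum w, l, hl1, hl2, hl3⟩
  obtain ⟨l', hl'1, hl'2, hl'3⟩ := Nat.sInf_mem hne
  have hlb := invNum_le_length l' hl'2
  rw [hl'3] at hlb
  have : invNum w ≤ coxLen w := by rw [coxLen, ← hl'1]; exact hlb
  omega

/-! ### the double coset invariant -/

def nF (lam nu : List ℕ) (w : Equiv.Perm (Fin n)) : Finset (Fin n × Fin n) :=
  Finset.univ.filter fun p => blockIdx nu (p.1 : ℕ) < blockIdx nu (p.2 : ℕ) ∧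
    blockIdx lam ((w p.2 : Fin n) : ℕ) < blockIdx lam ((w p.1 : Fin n) : ℕ)

lemma nF_subset_invF (lam nu : List ℕ) (w : Equiv.Perm (Fin n)) : nF lam nu w ⊆ invF w := by
  intro p hp
  simp only [nF, invF, Finset.mem_filter, Finset.mem_univ, true_and] at *
  exact ⟨Fin.lt_def.mpr (lt_of_blockIdx_lt hp.1), Fin.lt_def.mpr (lt_of_blockIdx_lt hp.2)⟩

lemma card_nF_conj (lam nu : List ℕ) (w a b : Equiv.Perm (Fin n))
    (ha : a ∈ young n lam) (hb : b ∈ young n nu) :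
    (nF lam nu (a * w * b)).card = (nF lam nu w).card := by
  apply Finset.card_equiv (Equiv.prodCongr b b)
  intro p
  simp only [nF, Finset.mem_filter, Finset.mem_univ, true_and, Equiv.prodCongr_apply,
    Prod.map_fst, Prod.map_snd]
  simp only [Equiv.Perm.mul_apply]
  rw [ha (w (b p.1)), ha (w (b p.2)), hb p.1, hb p.2]

lemma invF_eq_nF_of_good (lam nu : List ℕ) (w : Equiv.Perm (Fin n))
    (h1 : GoodN nu w) (h2 : GoodN lam w⁻¹) : invF w = nF lam nu w := by
  apply Finset.Subset.antisymm _ (nF_subset_invF lam nu w)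
  intro p hp
  simp only [invF, nF, Finset.mem_filter, Finset.mem_univ, true_and] at *
  obtain ⟨hlt, hw⟩ := hp
  constructor
  · rcases lt_trichotomy (blockIdx nu (p.1 : ℕ)) (blockIdx nu (p.2 : ℕ)) with hc | hc | hc
    · exact hc
    · exact absurd (chain_lemma nu w h1 p.1 p.2 hlt hc) (not_lt_of_gt hw)
    · exact absurd hlt (not_lt_of_gt (Fin.lt_def.mpr (lt_of_blockIdx_lt hc)))
  · rcases lt_trichotomy (blockIdx lam ((w p.2 : Fin n) : ℕ))
      (blockIdx lam ((w p.1 : Fin n) : ℕ)) with hc | hc | hc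
    · exact hc
    · have := chain_lemma lam w⁻¹ h2 (w p.2) (w p.1) hw hc
      rw [Equiv.Perm.inv_apply_self, Equiv.Perm.inv_apply_self] at this
      exact absurd hlt (not_lt_of_gt this)
    · exact absurd (Fin.lt_def.mpr (lt_of_blockIdx_lt hc)) (not_lt_of_gt hw)

lemma one_mem_young (c : List ℕ) : (1 : Equiv.Perm (Fin n)) ∈ young n c := fun _ => rfl

lemma swap_mem_young (c : List ℕ) {i : ℕ} (h : i + 1 < n)
    (hb : blockIdx c i = blockIdx c (i + 1)) :
    Equiv.swap (⟨i, Nat.lt_of_succ_lt h⟩ : Fin n) ⟨i + 1, h⟩ ∈ young n c := by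
  intro k
  rcases eq_or_ne k ⟨i, Nat.lt_of_succ_lt h⟩ with hk | hk
  · subst hk
    rw [Equiv.swap_apply_left]
    exact hb.symm
  · rcases eq_or_ne k ⟨i + 1, h⟩ with hk2 | hk2
    · subst hk2
      rw [Equiv.swap_apply_right]
      exact hb
    · rw [Equiv.swap_apply_of_ne_of_ne hk hk2]

lemma minimal_iff_good (lam nu : List ℕ) (w : Equiv.Perm (Fin n)) :
    (∀ w' ∈ dCoset n lam nu w, coxLen w ≤ coxLen w') ↔ (GoodN nu w ∧ GoodN lam w⁻¹) := by
  constructor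
  · intro hmin
    constructor
    · intro i h hb
      by_contra hle
      push_neg at hle
      have hne : w ⟨i + 1, h⟩ ≠ w ⟨i, Nat.lt_of_succ_lt h⟩ := by
        intro e
        have := w.injective e
        rw [Fin.ext_iff] at this
        simp at this
      have hdesc : w ⟨i + 1, h⟩ < w ⟨i, Nat.lt_of_succ_lt h⟩ := lt_of_le_of_ne hle hne
      set s : Equiv.Perm (Fin n) :=
        Equiv.swap (⟨i, Nat.lt_of_succ_lt h⟩ : Fin n) ⟨i + 1, h⟩ with hs
      have hsmem : s ∈ young n nu := swap_mem_young nu h hb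
      have hd : w * s ∈ dCoset n lam nu w :=
        ⟨1, one_mem_young lam, s, hsmem, by rw [one_mul]⟩
      have hmin' := hmin (w * s) hd
      rw [coxLen_eq_invNum, coxLen_eq_invNum] at hmin'
      have hrel := invNum_mul_swap_of_gt h w hdesc
      rw [← hs] at hrel
      omega
    · intro i h hb
      by_contra hle
      push_neg at hle
      have hne : w⁻¹ ⟨i + 1, h⟩ ≠ w⁻¹ ⟨i, Nat.lt_of_succ_lt h⟩ := by
        intro e
        have := w⁻¹.injective e
        rw [Fin.ext_iff] at this
        simp at this
      have hdesc : w⁻¹ ⟨i + 1, h⟩ < w⁻¹ ⟨i, Nat.lt_of_succ_lt h⟩ := lt_of_le_of_ne hle hne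
      set s : Equiv.Perm (Fin n) :=
        Equiv.swap (⟨i, Nat.lt_of_succ_lt h⟩ : Fin n) ⟨i + 1, h⟩ with hs
      have hsmem : s ∈ young n lam := swap_mem_young lam h hb
      have hd : s * w ∈ dCoset n lam nu w :=
        ⟨s, hsmem, 1, one_mem_young nu, by rw [mul_one]⟩
      have hmin' := hmin (s * w) hd
      rw [coxLen_eq_invNum, coxLen_eq_invNum] at hmin'
      have hrel := invNum_mul_swap_of_gt h w⁻¹ hdesc
      rw [← hs] at hrel
      have h1 : invNum (s * w) = invNum (w⁻¹ * s) := by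
        rw [← invNum_inv (s * w), mul_inv_rev]
        congr 1
      have h2 := invNum_inv w
      omega
  · rintro ⟨h1, h2⟩ w' ⟨a, ha, b, hb, rfl⟩
    rw [coxLen_eq_invNum, coxLen_eq_invNum]
    calc invNum w = (nF lam nu w).card := by
          rw [invNum, invF_eq_nF_of_good lam nu w h1 h2]
    _ = (nF lam nu (a * w * b)).card := (card_nF_conj lam nu w a b ha hb).symm
    _ ≤ invNum (a * w * b) := Finset.card_le_card (nF_subset_invF lam nu _)

lemma card_fiber_perm (nu : List ℕ) (w : Equiv.Perm (Fin n)) (j : ℕ) :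
    (Finset.univ.filter fun k : Fin n => blockIdx nu ((w⁻¹ k : Fin n) : ℕ) = j).card
      = (Finset.univ.filter fun m : Fin n => blockIdx nu (m : ℕ) = j).card := by
  apply Finset.card_equiv (w⁻¹ : Equiv.Perm (Fin n))
  intro k
  simp

lemma good_eq_on (nu : List ℕ) (w w' : Equiv.Perm (Fin n))
    (h1 : GoodN nu w) (h1' : GoodN nu w')
    (heq : ∀ k : Fin n, blockIdx nu ((w⁻¹ k : Fin n) : ℕ) = blockIdx nu ((w'⁻¹ k : Fin n) : ℕ)) :
    w = w' := by
  apply Equiv.ext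
  intro i
  set j := blockIdx nu (i : ℕ) with hj
  set Bj := Finset.univ.filter (fun m : Fin n => blockIdx nu (m : ℕ) = j) with hBj
  set Cj := Finset.univ.filter
    (fun k : Fin n => blockIdx nu ((w⁻¹ k : Fin n) : ℕ) = j) with hCj
  have hcard : Cj.card = Bj.card := card_fiber_perm nu w j
  have hmemB : ∀ m ∈ Bj, w m ∈ Cj := by
    intro m hm
    simp only [hBj, hCj, Finset.mem_filter, Finset.mem_univ, true_and] at *
    rw [Equiv.Perm.inv_apply_self]
    exact hm
  have hmemB' : ∀ m ∈ Bj, w' m ∈ Cj := by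
    intro m hm
    simp only [hBj, hCj, Finset.mem_filter, Finset.mem_univ, true_and] at *
    rw [heq (w' m), Equiv.Perm.inv_apply_self]
    exact hm
  have hEmem : ∀ x : Fin Bj.card, (Bj.orderEmbOfFin rfl) x ∈ Bj :=
    fun x => Finset.orderEmbOfFin_mem Bj rfl x
  have hblk : ∀ x : Fin Bj.card, blockIdx nu (((Bj.orderEmbOfFin rfl) x : Fin n) : ℕ) = j := by
    intro x
    have := hEmem x
    simp only [hBj, Finset.mem_filter, Finset.mem_univ, true_and] at this
    exact this
  have hsm : StrictMono (fun x : Fin Bj.card => w ((Bj.orderEmbOfFin rfl) x)) := by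
    intro x y hxy
    exact chain_lemma nu w h1 _ _ ((Bj.orderEmbOfFin rfl).strictMono hxy)
      (by rw [hblk x, hblk y])
  have hsm' : StrictMono (fun x : Fin Bj.card => w' ((Bj.orderEmbOfFin rfl) x)) := by
    intro x y hxy
    exact chain_lemma nu w' h1' _ _ ((Bj.orderEmbOfFin rfl).strictMono hxy)
      (by rw [hblk x, hblk y])
  have e1 : (fun x : Fin Bj.card => w ((Bj.orderEmbOfFin rfl) x)) = Cj.orderEmbOfFin hcard :=
    Finset.orderEmbOfFin_unique hcard (fun x => hmemB _ (hEmem x)) hsm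
  have e1' : (fun x : Fin Bj.card => w' ((Bj.orderEmbOfFin rfl) x)) = Cj.orderEmbOfFin hcard :=
    Finset.orderEmbOfFin_unique hcard (fun x => hmemB' _ (hEmem x)) hsm'
  have hiB : i ∈ Bj := by
    rw [hBj, Finset.mem_filter]
    exact ⟨Finset.mem_univ i, hj.symm⟩
  obtain ⟨x, hx⟩ : ∃ x, (Bj.orderEmbOfFin rfl) x = i := by
    have hr := Finset.range_orderEmbOfFin Bj (rfl : Bj.card = Bj.card)
    have : i ∈ Set.range (Bj.orderEmbOfFin (rfl : Bj.card = Bj.card)) := by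
      rw [hr]
      exact Finset.mem_coe.mpr hiB
    exact this
  calc w i = w ((Bj.orderEmbOfFin rfl) x) := by rw [hx]
  _ = (Cj.orderEmbOfFin hcard) x := congrFun e1 x
  _ = w' ((Bj.orderEmbOfFin rfl) x) := (congrFun e1' x).symm
  _ = w' i := by rw [hx]

lemma sum_getD (c : List ℕ) : ∑ j ∈ Finset.range c.length, c.getD j 0 = c.sum := by
  induction c with
  | nil => simp
  | cons x c ih =>
    rw [List.length_cons, Finset.sum_range_succ']
    simp only [List.getD_cons_succ, List.getD_cons_zero, List.sum_cons]
    rw [ih]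
    omega

end CoxAux

open CoxAux

/-- The map `w ↦ wT` (with `T` the type-`ν` standard filling of the `λ`-diagram,
`wT(k) = T(w⁻¹ k) = ν`-block index of `w⁻¹ k`) is a bijection from the set of minimal
length representatives of the double cosets `S_λ \ S_n / S_ν` onto the set of row
semi-standard `λ`-tableaux of type `ν` (fillings of the `λ`-diagram with weakly
increasing rows, containing the value `i` exactly `m_i` times). -/
theorem bijOn_min_reps_row_semistandard
    (n : ℕ) (lam nu : List ℕ)
    (hlam : lam.sum = n) (hnu : nu.sum = n)
    (hlampos : ∀ x ∈ lam, 0 < x) (hnupos : ∀ x ∈ nu, 0 < x) :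
    Set.BijOn
      (fun w : Equiv.Perm (Fin n) => fun k : Fin n => blockIdx nu ((w⁻¹ k : Fin n) : ℕ))
      {w | ∀ w' ∈ dCoset n lam nu w, coxLen w ≤ coxLen w'}
      {f : Fin n → ℕ | rowIncr n lam f ∧
        ∀ j < nu.length,
          (Finset.univ.filter (fun k : Fin n => f k = j)).card = nu.getD j 0} := by
  refine ⟨?_, ?_, ?_⟩
  · -- MapsTo
    intro w hw
    obtain ⟨hgN, hgL⟩ := (minimal_iff_good lam nu w).mp hw
    refine ⟨?_, ?_⟩
    · intro k h hb
      have hlt := hgL k h hb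
      exact blockIdx_mono nu (le_of_lt (Fin.lt_def.mp hlt))
    · intro j hj
      rw [card_fiber_perm nu w j, card_blockIdx_fiber nu hnu hj]
  · -- InjOn
    intro w hw w' hw' heq
    obtain ⟨hgN, _⟩ := (minimal_iff_good lam nu w).mp hw
    obtain ⟨hgN', _⟩ := (minimal_iff_good lam nu w').mp hw'
    exact good_eq_on nu w w' hgN hgN' (fun k => congrFun heq k)
  · -- SurjOn
    intro f hf
    obtain ⟨hrow, hcount⟩ := hf
    -- every value of f is < nu.length
    have hflt : ∀ k : Fin n, f k < nu.length := by
      have hsum : ∑ j ∈ Finset.range nu.length,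
          (Finset.univ.filter fun k : Fin n => f k = j).card = n := by
        rw [Finset.sum_congr rfl (fun j hj => hcount j (Finset.mem_range.mp hj)),
          sum_getD nu, hnu]
      have hbu : (Finset.univ.filter fun k : Fin n => f k < nu.length)
          = (Finset.range nu.length).biUnion
            (fun j => Finset.univ.filter fun k : Fin n => f k = j) := by
        ext k
        simp only [Finset.mem_filter, Finset.mem_univ, true_and, Finset.mem_biUnion,
          Finset.mem_range]
        constructor
        · intro hk
          exact ⟨f k, hk, rfl⟩
        · rintro ⟨j, hj, rfl⟩
          exact hj
      have hdisj : ∀ j ∈ Finset.range nu.length, ∀ j' ∈ Finset.range nu.length, j ≠ j' →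
          Disjoint (Finset.univ.filter fun k : Fin n => f k = j)
            (Finset.univ.filter fun k : Fin n => f k = j') := by
        intro j _ j' _ hne
        rw [Finset.disjoint_left]
        intro k hk hk'
        simp only [Finset.mem_filter, Finset.mem_univ, true_and] at hk hk'
        exact hne (hk ▸ hk' ▸ rfl)
      have hcov : (Finset.univ.filter fun k : Fin n => f k < nu.length) = Finset.univ := by
        apply Finset.eq_univ_of_card
        rw [hbu, Finset.card_biUnion hdisj, hsum, Fintype.card_fin]
      intro k
      have := Finset.eq_univ_iff_forall.mp hcov k
      simpa using this
    set σ : Equiv.Perm (Fin n) := Tuple.sort f with hσ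
    obtain ⟨hmono, hstab⟩ := Tuple.eq_sort_iff.mp hσ
    have hkey : (fun i : Fin n => f (σ i)) = (fun i : Fin n => blockIdx nu (i : ℕ)) := by
      apply monotone_eq_of_fiber_card_eq
      · exact hmono
      · intro p q hpq
        exact blockIdx_mono nu (Fin.le_def.mp hpq)
      · intro j
        have htrans : (Finset.univ.filter fun k : Fin n => f (σ k) = j).card
            = (Finset.univ.filter fun k : Fin n => f k = j).card := by
          apply Finset.card_equiv (σ : Equiv.Perm (Fin n))
          intro k
          simp
        rcases lt_or_ge j nu.length with hj | hj
        · rw [htrans, hcount j hj, card_blockIdx_fiber nu hnu hj]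
        · have e1 : (Finset.univ.filter fun k : Fin n => f k = j) = ∅ := by
            rw [Finset.filter_eq_empty_iff]
            intro k _
            have := hflt k
            omega
          have e2 : (Finset.univ.filter fun k : Fin n => blockIdx nu (k : ℕ) = j) = ∅ := by
            rw [Finset.filter_eq_empty_iff]
            intro k _
            have := blockIdx_lt_length nu hnu k.isLt
            omega
          rw [htrans, e1, e2]
    have hkey' : ∀ i : Fin n, f (σ i) = blockIdx nu (i : ℕ) := fun i => congrFun hkey i
    have hfix : ∀ k : Fin n, blockIdx nu ((σ⁻¹ k : Fin n) : ℕ) = f k := by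
      intro k
      rw [← hkey' (σ⁻¹ k), Equiv.Perm.apply_inv_self]
    refine ⟨σ, ?_, ?_⟩
    · apply (minimal_iff_good lam nu σ).mpr
      constructor
      · intro i h hb
        apply hstab ⟨i, Nat.lt_of_succ_lt h⟩ ⟨i + 1, h⟩ (Fin.mk_lt_mk.mpr (Nat.lt_succ_self i))
        rw [hkey' ⟨i, Nat.lt_of_succ_lt h⟩, hkey' ⟨i + 1, h⟩]
        exact hb
      · intro i h hb
        have hle : f ⟨i, Nat.lt_of_succ_lt h⟩ ≤ f ⟨i + 1, h⟩ := hrow i h hb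
        rcases lt_or_eq_of_le hle with hlt | heqf
        · rw [Fin.lt_def]
          apply lt_of_blockIdx_lt (c := nu)
          rw [hfix ⟨i, Nat.lt_of_succ_lt h⟩, hfix ⟨i + 1, h⟩]
          exact hlt
        · have hne : σ⁻¹ ⟨i, Nat.lt_of_succ_lt h⟩ ≠ σ⁻¹ ⟨i + 1, h⟩ := by
            intro e
            have := σ⁻¹.injective e
            rw [Fin.ext_iff] at this
            simp at this
          rcases lt_or_gt_of_ne hne with hlt | hgt
          · exact hlt
          · exfalso
            have hcon := hstab (σ⁻¹ ⟨i + 1, h⟩) (σ⁻¹ ⟨i, Nat.lt_of_succ_lt h⟩) hgt ?_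
            · rw [Equiv.Perm.apply_inv_self, Equiv.Perm.apply_inv_self, Fin.lt_def] at hcon
              simp at hcon
            · rw [Equiv.Perm.apply_inv_self, Equiv.Perm.apply_inv_self]
              exact heqf.symm
    · funext k
      exact hfix k
end

section
/- Let λ_1 > λ_2 > 0 be rationals and p_1, p_2 positive integers with s_1 = λ_1 p_1 and s_2 = λ_2 p_2 integers, gcd(s_1, p_1) = gcd(s_2, p_2) = 1, and s = s_1 + s_2. Suppose (m_1,...,m_l) is a composition of n = p_1 + p_2 and (s'_1,...,s'_l) an extended partition of s (nonnegative integers summing to s) with s'_1/m_1 > s'_2/m_2 > ... > s'_l/m_l, such that the vector ((s'_1/m_1)^{m_1},...,(s'_l/m_l)^{m_l}) is a positive real multiple of (λ_1^{p_1}, λ_2^{p_2}). Then l = 2, (m_1, m_2) = (p_1, p_2), and (s'_1, s'_2) = (s_1, s_2). -/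
/-- The multiset concatenation `((s'_1/m_1)^{m_1}, …, (s'_l/m_l)^{m_l})` over `ℚ`. -/
def ratioMultisetQ (mm ss : List ℕ) : Multiset ℚ :=
  (List.range mm.length).foldr
    (fun i acc => Multiset.replicate (mm.getD i 0) ((ss.getD i 0 : ℚ) / (mm.getD i 0 : ℚ)) + acc) 0

lemma rq_nil (ss : List ℕ) : ratioMultisetQ [] ss = 0 := rfl

lemma rq_cons (m t : ℕ) (mm ss : List ℕ) :
    ratioMultisetQ (m :: mm) (t :: ss) =
      Multiset.replicate m ((t : ℚ) / (m : ℚ)) + ratioMultisetQ mm ss := by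
  unfold ratioMultisetQ
  rw [List.length_cons, List.range_succ_eq_map, List.foldr_cons, List.foldr_map]
  simp

lemma rq_mem {mm ss : List ℕ} (hlen : ss.length = mm.length) :
    ∀ x ∈ ratioMultisetQ mm ss, ∃ i, i < mm.length ∧ x = (ss.getD i 0 : ℚ) / (mm.getD i 0 : ℚ) := by
  induction mm generalizing ss with
  | nil => intro x hx; simp [rq_nil] at hx
  | cons m mm ih =>
    cases ss with
    | nil => simp at hlen
    | cons t ss =>
      intro x hx
      rw [rq_cons] at hx
      rcases Multiset.mem_add.1 hx with h | h
      · exact ⟨0, by simp, by simpa using (Multiset.eq_of_mem_replicate h)⟩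
      · obtain ⟨i, hi, hx⟩ := ih (by simpa using hlen) x h
        exact ⟨i + 1, by simpa using hi, by simpa using hx⟩

lemma rq_mem_of_lt {mm ss : List ℕ} (hlen : ss.length = mm.length) (hpos : ∀ x ∈ mm, 0 < x) :
    ∀ i < mm.length, (ss.getD i 0 : ℚ) / (mm.getD i 0 : ℚ) ∈ ratioMultisetQ mm ss := by
  induction mm generalizing ss with
  | nil => intro i hi; simp at hi
  | cons m mm ih =>
    intro i hi
    cases ss with
    | nil => simp at hlen
    | cons t ss =>
      rw [rq_cons]
      cases i with
      | zero =>
        refine Multiset.mem_add.2 (Or.inl ?_)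
        simp [Multiset.mem_replicate]
        exact (hpos m List.mem_cons_self).ne'
      | succ j =>
        refine Multiset.mem_add.2 (Or.inr ?_)
        simpa using ih (by simpa using hlen) (fun x hx => hpos x (List.mem_cons_of_mem _ hx)) j (by simpa using hi)


/-- Uniqueness statement underlying Proposition 3.3: with `λ_1 > λ_2 > 0` rationals,
`s_1 = λ_1 p_1`, `s_2 = λ_2 p_2` integers coprime to `p_1`, `p_2` respectively, if
`(m_1,…,m_l)` is a composition of `n = p_1 + p_2` and `(s'_1,…,s'_l)` nonnegative
integers summing to `s = s_1 + s_2` with strictly decreasing ratios whose concatenated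
vector is a positive multiple of `(λ_1^{p_1}, λ_2^{p_2})`, then `l = 2`,
`(m_1, m_2) = (p_1, p_2)` and `(s'_1, s'_2) = (s_1, s_2)`. -/
theorem newton_vector_uniqueness
    (n s p1 p2 s1 s2 : ℕ) (lam1 lam2 : ℚ)
    (hl : lam2 < lam1) (hl2 : 0 < lam2)
    (hp1 : 0 < p1) (hp2 : 0 < p2) (hpn : p1 + p2 = n)
    (hs1 : (s1 : ℚ) = lam1 * p1) (hs2 : (s2 : ℚ) = lam2 * p2)
    (hg1 : Nat.gcd s1 p1 = 1) (hg2 : Nat.gcd s2 p2 = 1)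
    (hs : s = s1 + s2)
    (mm ss : List ℕ) (hlen : ss.length = mm.length)
    (hposm : ∀ x ∈ mm, 0 < x) (hsumm : mm.sum = n) (hsums : ss.sum = s)
    (hdec : ∀ i j : ℕ, i < j → j < mm.length →
      (ss.getD j 0 : ℚ) / (mm.getD j 0 : ℚ) < (ss.getD i 0 : ℚ) / (mm.getD i 0 : ℚ))
    (hprop : ∃ r : ℚ, 0 < r ∧
      ratioMultisetQ mm ss =
        Multiset.replicate p1 (r * lam1) + Multiset.replicate p2 (r * lam2)) :
    mm = [p1, p2] ∧ ss = [s1, s2] := by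
  obtain ⟨r, hr, hM⟩ := hprop
  set a := r * lam1 with ha_def
  set b := r * lam2 with hb_def
  have hba : b < a := by
    simp only [ha_def, hb_def]; exact mul_lt_mul_of_pos_left hl hr
  have hane : a ≠ b := hba.ne'
  have hmemM : ∀ x ∈ ratioMultisetQ mm ss, x = a ∨ x = b := by
    intro x hx
    rw [hM] at hx
    rcases Multiset.mem_add.1 hx with h | h
    · exact Or.inl (Multiset.eq_of_mem_replicate h)
    · exact Or.inr (Multiset.eq_of_mem_replicate h)
  have haM : a ∈ ratioMultisetQ mm ss := by
    rw [hM]; exact Multiset.mem_add.2 (Or.inl (Multiset.mem_replicate.2 ⟨hp1.ne', rfl⟩))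
  have hbM : b ∈ ratioMultisetQ mm ss := by
    rw [hM]; exact Multiset.mem_add.2 (Or.inr (Multiset.mem_replicate.2 ⟨hp2.ne', rfl⟩))
  -- length is 2
  have hlen2 : mm.length = 2 := by
    have hne0 : mm.length ≠ 0 := by
      intro h0
      rw [List.length_eq_zero_iff] at h0
      subst h0
      simp at hsumm
      omega
    have hne1 : mm.length ≠ 1 := by
      intro h1
      obtain ⟨i, hi, hia⟩ := rq_mem hlen a haM
      obtain ⟨j, hj, hjb⟩ := rq_mem hlen b hbM
      rw [h1] at hi hj
      interval_cases i
      interval_cases j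
      exact hane (hia.trans hjb.symm)
    have hlt3 : mm.length < 3 := by
      by_contra h3
      push_neg at h3
      have d01 := hdec 0 1 (by omega) (by omega)
      have d12 := hdec 1 2 (by omega) (by omega)
      have h0 := hmemM _ (rq_mem_of_lt hlen hposm 0 (by omega))
      have h1 := hmemM _ (rq_mem_of_lt hlen hposm 1 (by omega))
      have h2 := hmemM _ (rq_mem_of_lt hlen hposm 2 (by omega))
      rcases h0 with h0 | h0 <;> rcases h1 with h1 | h1 <;> rcases h2 with h2 | h2 <;>
        rw [h0] at d01 <;> rw [h1] at d01 d12 <;> rw [h2] at d12 <;> linarith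
    omega
  obtain ⟨m1, m2, hmm⟩ := List.length_eq_two.1 hlen2
  obtain ⟨t1, t2, hss⟩ := List.length_eq_two.1 (hlen.trans hlen2)
  subst hmm hss
  have hm1 : 0 < m1 := hposm m1 (by simp)
  have hm2 : 0 < m2 := hposm m2 (by simp)
  have hp1Q : (0 : ℚ) < p1 := by exact_mod_cast hp1
  have hp2Q : (0 : ℚ) < p2 := by exact_mod_cast hp2
  have hm1Q : (m1 : ℚ) ≠ 0 := Nat.cast_ne_zero.2 hm1.ne'
  have hm2Q : (m2 : ℚ) ≠ 0 := Nat.cast_ne_zero.2 hm2.ne'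
  have r01 : (t2 : ℚ) / m2 < (t1 : ℚ) / m1 := by simpa using hdec 0 1 (by omega) (by omega)
  -- identify the two ratios
  have h0 := hmemM _ (rq_mem_of_lt hlen hposm 0 (by simp))
  have h1 := hmemM _ (rq_mem_of_lt hlen hposm 1 (by simp))
  simp only [List.getD_cons_zero, List.getD_cons_succ] at h0 h1
  have ha : (t1 : ℚ) / m1 = a := by
    rcases h0 with h0 | h0
    · exact h0
    · rcases h1 with h1 | h1 <;> linarith
  have hb : (t2 : ℚ) / m2 = b := by
    rcases h1 with h1 | h1
    · rw [h1] at r01; rw [ha] at r01; linarith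
    · exact h1
  -- count to identify m1 = p1
  have hM2 : ratioMultisetQ [m1, m2] [t1, t2] =
      Multiset.replicate m1 ((t1 : ℚ) / m1) + Multiset.replicate m2 ((t2 : ℚ) / m2) := by
    rw [rq_cons, rq_cons, rq_nil, add_zero]
  have hcount := congrArg (Multiset.count a) (hM2.symm.trans hM)
  rw [ha, hb] at hcount
  simp [Multiset.count_replicate, hane, hane.symm] at hcount
  -- hcount : m1 = p1
  have hm1p : m1 = p1 := hcount
  have hm2p : m2 = p2 := by
    have : m1 + m2 = n := by simpa using hsumm
    omega
  subst hm1p hm2p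
  -- now solve for t1, t2
  have ht1 : (t1 : ℚ) = r * s1 := by
    rw [hs1]
    have := ha
    rw [div_eq_iff hm1Q] at this
    rw [this, ha_def]; ring
  have ht2 : (t2 : ℚ) = r * s2 := by
    rw [hs2]
    have := hb
    rw [div_eq_iff hm2Q] at this
    rw [this, hb_def]; ring
  have hsum : t1 + t2 = s1 + s2 := by
    have : t1 + t2 = s := by simpa using hsums
    omega
  have hsQ : (t1 : ℚ) + t2 = (s1 : ℚ) + s2 := by exact_mod_cast congrArg (Nat.cast : ℕ → ℚ) hsum
  have hs1pos : (0 : ℚ) < s1 := by rw [hs1]; exact mul_pos (hl2.trans hl) hp1Q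
  have hs2pos : (0 : ℚ) < s2 := by rw [hs2]; exact mul_pos hl2 hp2Q
  have hr1 : r = 1 := by
    rw [ht1, ht2] at hsQ
    have h : (r - 1) * ((s1 : ℚ) + s2) = 0 := by linarith
    rcases mul_eq_zero.1 h with h | h
    · linarith
    · linarith
  have ht1' : t1 = s1 := by
    have : (t1 : ℚ) = s1 := by rw [ht1, hr1, one_mul]
    exact_mod_cast this
  have ht2' : t2 = s2 := by
    have : (t2 : ℚ) = s2 := by rw [ht2, hr1, one_mul]
    exact_mod_cast this
  exact ⟨rfl, by rw [ht1', ht2']⟩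
end
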